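/- Let K/Q be cyclic of prime degree p with Galois group generated by σ, J the group of fractional ideals of K, and N = N_{K/Q} the ideal norm. Then every fractional ideal I with N(I) = (1) lies in the image of the map I ↦ I/σ(I); that is, ker N / im(1-σ) is trivial on J. -/

import Mathlib

set_option synthInstance.maxHeartbeats 1000000
set_option maxHeartbeats 4000000

open NumberField
open scoped nonZeroDivisors

namespace KerNormAux

open IsDedekindDomain FractionalIdeal

variable {K : Type*} [Field K] [NumberField K]

/-- Action of an integral automorphism on the height one spectrum. -/
def specMap (φ : 𝓞 K ≃ₐ[ℤ] 𝓞 K) (v : HeightOneSpectrum (𝓞 K)) : HeightOneSpectrum (𝓞 K) where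
  asIdeal := v.asIdeal.comap (φ.symm : 𝓞 K →+* 𝓞 K)
  isPrime := v.isPrime.comap _
  ne_bot := by
    intro h
    apply v.ne_bot
    rw [Submodule.eq_bot_iff] at h ⊢
    intro x hx
    have : φ x ∈ v.asIdeal.comap (φ.symm : 𝓞 K →+* 𝓞 K) := by
      simpa [Ideal.mem_comap] using hx
    simpa using h _ this

lemma mem_specMap {φ : 𝓞 K ≃ₐ[ℤ] 𝓞 K} {v : HeightOneSpectrum (𝓞 K)} {x : 𝓞 K} :
    x ∈ (specMap φ v).asIdeal ↔ φ.symm x ∈ v.asIdeal := Iff.rfl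

lemma specMap_specMap (φ ψ : 𝓞 K ≃ₐ[ℤ] 𝓞 K) (v : HeightOneSpectrum (𝓞 K)) :
    specMap φ (specMap ψ v) = specMap (φ * ψ) v := by
  ext x
  simp only [mem_specMap]
  rfl

lemma specMap_one (v : HeightOneSpectrum (𝓞 K)) : specMap (1 : 𝓞 K ≃ₐ[ℤ] 𝓞 K) v = v := by
  ext x
  simp [mem_specMap]
  rfl

lemma specMap_pow (φ : 𝓞 K ≃ₐ[ℤ] 𝓞 K) (n : ℕ) (v : HeightOneSpectrum (𝓞 K)) :
    (specMap φ)^[n] v = specMap (φ ^ n) v := by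
  induction n with
  | zero => rw [Function.iterate_zero_apply, pow_zero, specMap_one]
  | succ n ih => rw [Function.iterate_succ_apply', ih, specMap_specMap, ← pow_succ']

/-- The residue characteristic of a finite prime. -/
noncomputable def charQ (w : HeightOneSpectrum (𝓞 K)) : ℕ :=
  ringChar (𝓞 K ⧸ w.asIdeal)

lemma absNorm_ne_zero (w : HeightOneSpectrum (𝓞 K)) : Ideal.absNorm w.asIdeal ≠ 0 := by
  rw [ne_eq, Ideal.absNorm_eq_zero_iff]
  exact w.ne_bot

lemma charQ_spec (w : HeightOneSpectrum (𝓞 K)) :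
    (charQ w).Prime ∧ ∃ f : ℕ, 0 < f ∧ Ideal.absNorm w.asIdeal = charQ w ^ f := by
  letI : w.asIdeal.IsMaximal := w.isPrime.isMaximal w.ne_bot
  letI : Field (𝓞 K ⧸ w.asIdeal) := Ideal.Quotient.field _
  have hfin : Finite (𝓞 K ⧸ w.asIdeal) :=
    (Ideal.absNorm_ne_zero_iff w.asIdeal).mp (absNorm_ne_zero w)
  letI : Fintype (𝓞 K ⧸ w.asIdeal) := Fintype.ofFinite _
  haveI : CharP (𝓞 K ⧸ w.asIdeal) (charQ w) := ringChar.charP _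
  obtain ⟨n, hprime, hcard⟩ := FiniteField.card (𝓞 K ⧸ w.asIdeal) (charQ w)
  have habs : Ideal.absNorm w.asIdeal = Fintype.card (𝓞 K ⧸ w.asIdeal) := by
    rw [Ideal.absNorm_apply, Submodule.cardQuot_apply, Nat.card_eq_fintype_card]
  exact ⟨hprime, n, n.2, by rw [habs, hcard]⟩

lemma charQ_prime (w : HeightOneSpectrum (𝓞 K)) : (charQ w).Prime := (charQ_spec w).1

lemma charQ_mem (w : HeightOneSpectrum (𝓞 K)) : ((charQ w : ℤ) : 𝓞 K) ∈ w.asIdeal := by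
  letI : w.asIdeal.IsMaximal := w.isPrime.isMaximal w.ne_bot
  rw [← Ideal.Quotient.eq_zero_iff_mem]
  push_cast
  rw [map_natCast]
  exact ringChar.Nat.cast_ringChar

lemma comap_eq_span (w : HeightOneSpectrum (𝓞 K)) :
    w.asIdeal.comap (algebraMap ℤ (𝓞 K)) = Ideal.span {(charQ w : ℤ)} := by
  have hle : Ideal.span {(charQ w : ℤ)} ≤ w.asIdeal.comap (algebraMap ℤ (𝓞 K)) := by
    rw [Ideal.span_le, Set.singleton_subset_iff]
    have := charQ_mem w
    simpa [Ideal.mem_comap] using this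
  have hmax : (Ideal.span {(charQ w : ℤ)}).IsMaximal :=
    PrincipalIdealRing.isMaximal_of_irreducible
      (Int.prime_iff_natAbs_prime.mpr (by simpa using (charQ_prime w))).irreducible
  refine (hmax.eq_of_le ?_ hle).symm
  intro htop
  rw [Ideal.eq_top_iff_one, Ideal.mem_comap, _root_.map_one] at htop
  exact w.isPrime.ne_top (Ideal.eq_top_iff_one _ |>.mpr htop)

lemma dvd_absNorm_iff (w : HeightOneSpectrum (𝓞 K)) {ℓ : ℕ} (hl : ℓ.Prime) :
    ℓ ∣ Ideal.absNorm w.asIdeal ↔ ℓ = charQ w := by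
  obtain ⟨hp, f, hf, habs⟩ := charQ_spec w
  constructor
  · intro h
    rw [habs] at h
    exact (Nat.prime_dvd_prime_iff_eq hl hp).mp (hl.dvd_of_dvd_pow h)
  · rintro rfl
    rw [habs]
    exact dvd_pow_self _ hf.ne'

lemma comap_specMap (φ : 𝓞 K ≃ₐ[ℤ] 𝓞 K) (w : HeightOneSpectrum (𝓞 K)) :
    (specMap φ w).asIdeal.comap (algebraMap ℤ (𝓞 K)) = w.asIdeal.comap (algebraMap ℤ (𝓞 K)) := by
  ext m
  simp only [Ideal.mem_comap, mem_specMap]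
  have : φ.symm (algebraMap ℤ (𝓞 K) m) = algebraMap ℤ (𝓞 K) m := φ.symm.commutes m
  rw [this]

lemma charQ_eq_of_comap_eq {v w : HeightOneSpectrum (𝓞 K)}
    (h : v.asIdeal.comap (algebraMap ℤ (𝓞 K)) = w.asIdeal.comap (algebraMap ℤ (𝓞 K))) :
    charQ v = charQ w := by
  have := (comap_eq_span v).symm.trans (h.trans (comap_eq_span w))
  rw [Ideal.span_singleton_eq_span_singleton] at this
  rcases Int.associated_iff.mp this with h' | h'
  · exact_mod_cast h'
  · exfalso
    have h1 : (0:ℤ) < charQ v := by exact_mod_cast (charQ_prime v).pos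
    have h2 : (0:ℤ) < charQ w := by exact_mod_cast (charQ_prime w).pos
    omega

lemma charQ_specMap (φ : 𝓞 K ≃ₐ[ℤ] 𝓞 K) (w : HeightOneSpectrum (𝓞 K)) :
    charQ (specMap φ w) = charQ w :=
  charQ_eq_of_comap_eq (comap_specMap φ w)

lemma absNorm_specMap (φ : 𝓞 K ≃ₐ[ℤ] 𝓞 K) (w : HeightOneSpectrum (𝓞 K)) :
    Ideal.absNorm (specMap φ w).asIdeal = Ideal.absNorm w.asIdeal := by
  have hmap : w.asIdeal = Ideal.map (φ.symm : 𝓞 K ≃+* 𝓞 K).toRingHom (specMap φ w).asIdeal := by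
    rw [show (specMap φ w).asIdeal = w.asIdeal.comap (φ.symm : 𝓞 K →+* 𝓞 K) from rfl]
    exact (Ideal.map_comap_of_surjective _ φ.symm.surjective w.asIdeal).symm
  have e := Ideal.quotientEquiv (specMap φ w).asIdeal w.asIdeal
    (φ.symm : 𝓞 K ≃+* 𝓞 K) (by exact hmap)
  rw [Ideal.absNorm_apply, Ideal.absNorm_apply, Submodule.cardQuot_apply, Submodule.cardQuot_apply]
  exact Nat.card_congr e.toEquiv

lemma exists_conj [IsGalois ℚ K] (v w : HeightOneSpectrum (𝓞 K)) (h : charQ v = charQ w) :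
    ∃ g : K ≃ₐ[ℚ] K, specMap (galRestrict ℤ ℚ K (𝓞 K) g) v = w := by
  classical
  have key : (w.asIdeal : Set (𝓞 K)) ⊆
      ⋃ g ∈ (Finset.univ : Finset (K ≃ₐ[ℚ] K)),
        ((specMap (galRestrict ℤ ℚ K (𝓞 K) g) v).asIdeal : Set (𝓞 K)) := by
    intro x hx
    have hprod : ∏ g : K ≃ₐ[ℚ] K, galRestrict ℤ ℚ K (𝓞 K) g x ∈ w.asIdeal := by
      rw [← Finset.prod_erase_mul _ _ (Finset.mem_univ (1 : K ≃ₐ[ℚ] K))]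
      have h1 : galRestrict ℤ ℚ K (𝓞 K) 1 x = x := by
        rw [_root_.map_one]; rfl
      rw [h1]
      exact Ideal.mul_mem_left _ _ hx
    obtain ⟨N, hNprod⟩ : ∃ N : ℤ, algebraMap ℤ (𝓞 K) N
        = ∏ g : K ≃ₐ[ℚ] K, galRestrict ℤ ℚ K (𝓞 K) g x :=
      ⟨_, (prod_galRestrict_eq_norm ℤ ℚ K (𝓞 K) x).symm⟩
    have hNw : N ∈ w.asIdeal.comap (algebraMap ℤ (𝓞 K)) := by
      rw [Ideal.mem_comap, hNprod]; exact hprod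
    have hNv : N ∈ v.asIdeal.comap (algebraMap ℤ (𝓞 K)) := by
      rw [comap_eq_span] at hNw ⊢
      rw [h]; exact hNw
    rw [Ideal.mem_comap, hNprod, Ideal.IsPrime.prod_mem_iff] at hNv
    obtain ⟨g, -, hg⟩ := hNv
    have hx' : x ∈ (specMap (galRestrict ℤ ℚ K (𝓞 K) g⁻¹) v).asIdeal := by
      rw [mem_specMap]
      have : (galRestrict ℤ ℚ K (𝓞 K) g⁻¹).symm = galRestrict ℤ ℚ K (𝓞 K) g := by
        rw [_root_.map_inv]
        exact AlgEquiv.symm_symm _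
      rw [this]
      exact hg
    simp only [Set.mem_iUnion]
    exact ⟨g⁻¹, Finset.mem_univ _, hx'⟩
  have hp : ∀ g ∈ (Finset.univ : Finset (K ≃ₐ[ℚ] K)), g ≠ 1 → g ≠ 1 →
      ((specMap (galRestrict ℤ ℚ K (𝓞 K) g) v).asIdeal).IsPrime :=
    fun g _ _ _ => (specMap _ v).isPrime
  obtain ⟨g, -, hle⟩ := (Ideal.subset_union_prime 1 1 hp).mp key
  refine ⟨g, ?_⟩
  have hmax := w.isPrime.isMaximal w.ne_bot
  ext1
  exact (hmax.eq_of_le (specMap (galRestrict ℤ ℚ K (𝓞 K) g) v).isPrime.ne_top hle).symm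

lemma exists_iterate [IsGalois ℚ K] {p : ℕ} (hdeg : Module.finrank ℚ K = p)
    {σ : K ≃ₐ[ℚ] K} (hσ : orderOf σ = p)
    (v w : HeightOneSpectrum (𝓞 K)) (h : charQ v = charQ w) :
    ∃ n : ℕ, (specMap (galRestrict ℤ ℚ K (𝓞 K) σ))^[n] v = w := by
  obtain ⟨g, hg⟩ := exists_conj v w h
  have htop : Subgroup.zpowers σ = ⊤ := by
    apply Subgroup.eq_top_of_card_eq
    rw [Nat.card_zpowers, hσ, IsGalois.card_aut_eq_finrank, hdeg]
  have hmem : g ∈ Submonoid.powers σ := by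
    rw [mem_powers_iff_mem_zpowers, htop]
    trivial
  obtain ⟨n, hn⟩ := hmem
  exact ⟨n, by rw [specMap_pow, ← map_pow, show σ ^ n = g from hn, hg]⟩

/-- The prime `v` as a unit of the group of fractional ideals. -/
noncomputable def primeU (v : HeightOneSpectrum (𝓞 K)) : (FractionalIdeal (𝓞 K)⁰ K)ˣ :=
  Units.mk0 (v.asIdeal : FractionalIdeal (𝓞 K)⁰ K)
    (by rw [ne_eq, FractionalIdeal.coeIdeal_eq_zero]; exact v.ne_bot)

@[simp] lemma primeU_coe (v : HeightOneSpectrum (𝓞 K)) :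
    (primeU v : FractionalIdeal (𝓞 K)⁰ K) = (v.asIdeal : FractionalIdeal (𝓞 K)⁰ K) := rfl

lemma cW_mul (w : HeightOneSpectrum (𝓞 K)) (u u' : (FractionalIdeal (𝓞 K)⁰ K)ˣ) :
    count K w ((u * u' : _ˣ) : FractionalIdeal (𝓞 K)⁰ K)
      = count K w (u : FractionalIdeal (𝓞 K)⁰ K) + count K w (u' : FractionalIdeal (𝓞 K)⁰ K) := by
  rw [Units.val_mul, count_mul K w u.ne_zero u'.ne_zero]

lemma cW_inv (w : HeightOneSpectrum (𝓞 K)) (u : (FractionalIdeal (𝓞 K)⁰ K)ˣ) :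
    count K w ((u⁻¹ : _ˣ) : FractionalIdeal (𝓞 K)⁰ K)
      = -count K w (u : FractionalIdeal (𝓞 K)⁰ K) := by
  rw [← count_inv]
  norm_cast

lemma cW_zpow (w : HeightOneSpectrum (𝓞 K)) (u : (FractionalIdeal (𝓞 K)⁰ K)ˣ) (n : ℤ) :
    count K w ((u ^ n : _ˣ) : FractionalIdeal (𝓞 K)⁰ K)
      = n * count K w (u : FractionalIdeal (𝓞 K)⁰ K) := by
  rw [Units.val_zpow_eq_zpow_val, count_zpow]

lemma cW_prod {α : Type*} (w : HeightOneSpectrum (𝓞 K)) (s : Finset α)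
    (F : α → (FractionalIdeal (𝓞 K)⁰ K)ˣ) :
    count K w ((∏ a ∈ s, F a : _ˣ) : FractionalIdeal (𝓞 K)⁰ K)
      = ∑ a ∈ s, count K w (F a : FractionalIdeal (𝓞 K)⁰ K) := by
  classical
  induction s using Finset.induction_on with
  | empty => simpa using count_one K w
  | insert _ _ h ih => rw [Finset.prod_insert h, Finset.sum_insert h, cW_mul, ih]

open scoped Classical in
lemma count_prod_primeU {α : Type*} (w : HeightOneSpectrum (𝓞 K)) (s : Finset α)
    (u : α → HeightOneSpectrum (𝓞 K)) (g : α → ℤ) :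
    count K w ((∏ a ∈ s, primeU (u a) ^ g a : (FractionalIdeal (𝓞 K)⁰ K)ˣ)
        : FractionalIdeal (𝓞 K)⁰ K)
      = ∑ a ∈ s, g a * (if u a = w then 1 else 0) := by
  rw [cW_prod]
  refine Finset.sum_congr rfl fun a _ => ?_
  rw [cW_zpow, primeU_coe, count_maximal]

lemma units_eq_prod (I : (FractionalIdeal (𝓞 K)⁰ K)ˣ) (s : Finset (HeightOneSpectrum (𝓞 K)))
    (hs : ∀ w, w ∉ s → count K w (I : FractionalIdeal (𝓞 K)⁰ K) = 0) :
    I = ∏ w ∈ s, primeU w ^ (count K w (I : FractionalIdeal (𝓞 K)⁰ K)) := by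
  apply Units.ext
  rw [Units.coe_prod]
  have hcoe : ∀ w ∈ s, ((primeU w ^ count K w (I : FractionalIdeal (𝓞 K)⁰ K)
        : (FractionalIdeal (𝓞 K)⁰ K)ˣ) : FractionalIdeal (𝓞 K)⁰ K)
      = (w.asIdeal : FractionalIdeal (𝓞 K)⁰ K) ^ count K w (I : FractionalIdeal (𝓞 K)⁰ K) := by
    intro w _
    rw [Units.val_zpow_eq_zpow_val, primeU_coe]
  rw [Finset.prod_congr rfl hcoe]
  have hfac := finprod_heightOneSpectrum_factorization' K (Units.ne_zero I)
  refine hfac.symm.trans (finprod_eq_prod_of_mulSupport_subset _ ?_)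
  intro w hw
  by_contra hws
  rw [Function.mem_mulSupport] at hw
  rw [hs w hws, zpow_zero] at hw
  exact hw rfl

lemma absNorm_prod_primeU {α : Type*} (s : Finset α)
    (u : α → HeightOneSpectrum (𝓞 K)) (g : α → ℤ) :
    FractionalIdeal.absNorm ((∏ a ∈ s, primeU (u a) ^ g a : (FractionalIdeal (𝓞 K)⁰ K)ˣ)
        : FractionalIdeal (𝓞 K)⁰ K)
      = ∏ a ∈ s, (Ideal.absNorm (u a).asIdeal : ℚ) ^ g a := by
  rw [Units.coe_prod, map_prod]
  refine Finset.prod_congr rfl fun a _ => ?_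
  rw [Units.val_zpow_eq_zpow_val, primeU_coe, map_zpow₀,
    FractionalIdeal.coeIdeal_absNorm]

lemma S_prime {σ : K ≃ₐ[ℚ] K}
    {S : (FractionalIdeal (𝓞 K)⁰ K)ˣ →* (FractionalIdeal (𝓞 K)⁰ K)ˣ}
    (hS : ∀ (I : (FractionalIdeal (𝓞 K)⁰ K)ˣ) (x : K),
      x ∈ (S I : FractionalIdeal (𝓞 K)⁰ K) ↔
        ∃ y ∈ (I : FractionalIdeal (𝓞 K)⁰ K), σ y = x)
    (v : HeightOneSpectrum (𝓞 K)) :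
    S (primeU v) = primeU (specMap (galRestrict ℤ ℚ K (𝓞 K) σ) v) := by
  apply Units.ext
  apply FractionalIdeal.coeToSubmodule_injective
  ext x
  rw [FractionalIdeal.mem_coe, FractionalIdeal.mem_coe]
  rw [hS (primeU v) x, primeU_coe, primeU_coe]
  constructor
  · rintro ⟨y, hy, rfl⟩
    rw [FractionalIdeal.mem_coeIdeal] at hy
    obtain ⟨j, hj, rfl⟩ := hy
    rw [FractionalIdeal.mem_coeIdeal]
    refine ⟨galRestrict ℤ ℚ K (𝓞 K) σ j, ?_, ?_⟩
    · rw [mem_specMap]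
      simpa using hj
    · exact algebraMap_galRestrict_apply ℤ σ j
  · intro hx
    rw [FractionalIdeal.mem_coeIdeal] at hx
    obtain ⟨r, hr, rfl⟩ := hx
    rw [mem_specMap] at hr
    refine ⟨algebraMap (𝓞 K) K ((galRestrict ℤ ℚ K (𝓞 K) σ).symm r), ?_, ?_⟩
    · rw [FractionalIdeal.mem_coeIdeal]
      exact ⟨_, hr, rfl⟩
    · rw [← algebraMap_galRestrict_apply ℤ σ]
      congr 1
      exact (galRestrict ℤ ℚ K (𝓞 K) σ).apply_symm_apply r

lemma padic_prod {α : Type*} (ℓ : ℕ) [hℓ : Fact ℓ.Prime] (s : Finset α) (F : α → ℚ)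
    (h : ∀ a ∈ s, F a ≠ 0) :
    padicValRat ℓ (∏ a ∈ s, F a) = ∑ a ∈ s, padicValRat ℓ (F a) := by
  classical
  induction s using Finset.induction_on with
  | empty => simpa using padicValRat.one
  | @insert a s ha ih =>
      rw [Finset.prod_insert ha, Finset.sum_insert ha,
        padicValRat.mul (h a (Finset.mem_insert_self a s))
          (Finset.prod_ne_zero_iff.mpr fun b hb => h b (Finset.mem_insert_of_mem hb)),
        ih fun b hb => h b (Finset.mem_insert_of_mem hb)]

lemma padic_zpow (ℓ : ℕ) [Fact ℓ.Prime] {q : ℚ} (hq : q ≠ 0) (n : ℤ) :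
    padicValRat ℓ (q ^ n) = n * padicValRat ℓ q := by
  rcases n with n | n
  · rw [Int.ofNat_eq_coe, zpow_natCast, padicValRat.pow q]
  · rw [zpow_negSucc, padicValRat.inv, padicValRat.pow q]
    push_cast [Int.negSucc_eq]
    ring

end KerNormAux

open KerNormAux IsDedekindDomain FractionalIdeal

/-- Let `K/ℚ` be cyclic of prime degree `p` with Galois group generated by `σ`
(of order `p`).  Let `S` be the induced action of `σ` on the group `J` of
(invertible) fractional ideals of `K`, characterized by
`x ∈ σ(I) ↔ ∃ y ∈ I, σ y = x`.  Since the base field is `ℚ`, the relative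
ideal norm `N_{K/ℚ}(I)` is the ideal of `ℤ` generated by the absolute norm;
thus `N(I) = (1)` is equivalent to `absNorm I = 1` (the absolute norm of an
invertible fractional ideal being positive).  Then every fractional ideal of
norm `(1)` lies in the image of `I ↦ I ⬝ σ(I)⁻¹`:
`ker N / im (1 - σ)` is trivial. -/
theorem ker_norm_eq_image_one_sub_sigma
    (p : ℕ) (hp : p.Prime)
    (K : Type*) [Field K] [NumberField K] [IsGalois ℚ K]
    (hdeg : Module.finrank ℚ K = p)
    (σ : K ≃ₐ[ℚ] K) (hσ : orderOf σ = p)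
    (S : (FractionalIdeal (𝓞 K)⁰ K)ˣ →* (FractionalIdeal (𝓞 K)⁰ K)ˣ)
    (hS : ∀ (I : (FractionalIdeal (𝓞 K)⁰ K)ˣ) (x : K),
      x ∈ (S I : FractionalIdeal (𝓞 K)⁰ K) ↔
        ∃ y ∈ (I : FractionalIdeal (𝓞 K)⁰ K), σ y = x) :
    ∀ I : (FractionalIdeal (𝓞 K)⁰ K)ˣ,
      FractionalIdeal.absNorm (I : FractionalIdeal (𝓞 K)⁰ K) = 1 →
        ∃ A : (FractionalIdeal (𝓞 K)⁰ K)ˣ, I = A * (S A)⁻¹ := by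
  classical
  set t : HeightOneSpectrum (𝓞 K) → HeightOneSpectrum (𝓞 K) :=
    specMap (galRestrict ℤ ℚ K (𝓞 K) σ) with ht
  have finite_supp : ∀ I : (FractionalIdeal (𝓞 K)⁰ K)ˣ,
      {w : HeightOneSpectrum (𝓞 K) | count K w (I : FractionalIdeal (𝓞 K)⁰ K) ≠ 0}.Finite := by
    intro I
    have := FractionalIdeal.finite_factors (I : FractionalIdeal (𝓞 K)⁰ K)
    rwa [Filter.eventually_cofinite] at this
  set supp : (FractionalIdeal (𝓞 K)⁰ K)ˣ → Finset (HeightOneSpectrum (𝓞 K)) :=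
    fun I => (finite_supp I).toFinset with hsupp
  have mem_supp : ∀ I w, w ∈ supp I ↔ count K w (I : FractionalIdeal (𝓞 K)⁰ K) ≠ 0 := by
    intro I w
    rw [hsupp]
    exact Set.Finite.mem_toFinset _
  -- the `p`-th iterate of `t` is the identity
  have hσp : σ ^ p = 1 := by rw [← hσ]; exact pow_orderOf_eq_one σ
  have htp : ∀ x, t^[p] x = x := by
    intro x
    rw [ht, specMap_pow, ← map_pow, hσp, _root_.map_one, specMap_one]
  have hcorbit : ∀ (i : ℕ) (v : HeightOneSpectrum (𝓞 K)), charQ (t^[i] v) = charQ v := by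
    intro i v
    induction i with
    | zero => rfl
    | succ i ih => rw [Function.iterate_succ_apply', ht, charQ_specMap, ← ht, ih]
  have hqorbit : ∀ (i : ℕ) (v : HeightOneSpectrum (𝓞 K)),
      Ideal.absNorm ((t^[i] v).asIdeal) = Ideal.absNorm v.asIdeal := by
    intro i v
    induction i with
    | zero => rfl
    | succ i ih => rw [Function.iterate_succ_apply', ht, absNorm_specMap, ← ht, ih]
  have horb : ∀ v w : HeightOneSpectrum (𝓞 K), charQ w = charQ v →
      ∃ i < p, t^[i] v = w := by
    intro v w hcw
    obtain ⟨n, hn⟩ := exists_iterate hdeg hσ v w hcw.symm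
    refine ⟨n % p, Nat.mod_lt _ hp.pos, ?_⟩
    conv_rhs => rw [← hn, ← Nat.div_add_mod n p]
    rw [Function.iterate_add_apply, Function.iterate_mul]
    have : (t^[p])^[n / p] (t^[n % p] v) = t^[n % p] v := by
      have hid : t^[p] = id := funext htp
      rw [hid, Function.iterate_id, id_eq]
    rw [this]
  -- main strong induction on the size of the support
  suffices H : ∀ (n : ℕ) (I : (FractionalIdeal (𝓞 K)⁰ K)ˣ),
      FractionalIdeal.absNorm (I : FractionalIdeal (𝓞 K)⁰ K) = 1 →
      (supp I).card ≤ n → ∃ A : (FractionalIdeal (𝓞 K)⁰ K)ˣ, I = A * (S A)⁻¹ by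
    intro I hI
    exact H (supp I).card I hI le_rfl
  have trivial_case : ∀ I : (FractionalIdeal (𝓞 K)⁰ K)ˣ, supp I = ∅ →
      ∃ A : (FractionalIdeal (𝓞 K)⁰ K)ˣ, I = A * (S A)⁻¹ := by
    intro I hempty
    have hzero : ∀ w, count K w (I : FractionalIdeal (𝓞 K)⁰ K) = 0 := by
      intro w
      by_contra h
      have : w ∈ supp I := (mem_supp I w).mpr h
      rw [hempty] at this
      exact absurd this (Finset.notMem_empty w)
    have : I = 1 := by
      have := units_eq_prod I ∅ (fun w _ => hzero w)
      simpa using this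
    exact ⟨1, by rw [this, _root_.map_one, inv_one, mul_one]⟩
  intro n
  induction n with
  | zero =>
      intro I hI hcard
      exact trivial_case I (Finset.card_eq_zero.mp (Nat.le_zero.mp hcard))
  | succ n ih =>
      intro I hI hcard
      by_cases hemp : supp I = ∅
      · exact trivial_case I hemp
      obtain ⟨v, hv⟩ := Finset.nonempty_iff_ne_empty.mpr hemp
      have hev : count K v (I : FractionalIdeal (𝓞 K)⁰ K) ≠ 0 := (mem_supp I v).mp hv
      set ℓ : ℕ := charQ v with hℓ
      haveI : Fact ℓ.Prime := ⟨charQ_prime v⟩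
      set q : ℕ := Ideal.absNorm v.asIdeal with hq
      set e : HeightOneSpectrum (𝓞 K) → ℤ :=
        fun w => count K w (I : FractionalIdeal (𝓞 K)⁰ K) with he
      -- Step 2 : the sum of the exponents above ℓ vanishes
      set s₁ : Finset (HeightOneSpectrum (𝓞 K)) :=
        (supp I).filter (fun w => charQ w = ℓ) with hs₁
      have hsum₁ : ∑ w ∈ s₁, e w = 0 := by
        have hIeq := units_eq_prod I (supp I) (fun w hw => by
          by_contra h
          exact hw ((mem_supp I w).mpr h))
        have hnorm : (1:ℚ) = ∏ w ∈ supp I, (Ideal.absNorm w.asIdeal : ℚ) ^ e w := by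
          rw [← hI]
          conv_lhs => rw [hIeq]
          exact absNorm_prod_primeU (supp I) (fun w => w) e
        have hne : ∀ w ∈ supp I, ((Ideal.absNorm w.asIdeal : ℚ) ^ e w) ≠ 0 := fun w _ =>
          zpow_ne_zero _ (by exact_mod_cast absNorm_ne_zero w)
        have h0 := congrArg (padicValRat ℓ) hnorm
        rw [padicValRat.one, padic_prod ℓ _ _ hne] at h0
        have hterm : ∀ w ∈ supp I, padicValRat ℓ ((Ideal.absNorm w.asIdeal : ℚ) ^ e w)
            = e w * (padicValNat ℓ (Ideal.absNorm w.asIdeal) : ℤ) := by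
          intro w _
          rw [padic_zpow ℓ (by exact_mod_cast absNorm_ne_zero w) (e w), padicValRat.of_nat]
        rw [Finset.sum_congr rfl hterm] at h0
        have hsplit := Finset.sum_filter_add_sum_filter_not (supp I) (fun w => charQ w = ℓ)
          (fun w => e w * (padicValNat ℓ (Ideal.absNorm w.asIdeal) : ℤ))
        have hzero2 : ∑ w ∈ (supp I).filter (fun w => ¬ charQ w = ℓ),
            e w * (padicValNat ℓ (Ideal.absNorm w.asIdeal) : ℤ) = 0 := by
          refine Finset.sum_eq_zero fun w hw => ?_
          rw [Finset.mem_filter] at hw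
          have hnd : ¬ ℓ ∣ Ideal.absNorm w.asIdeal := fun hd =>
            hw.2 ((dvd_absNorm_iff w Fact.out).mp hd).symm
          rw [padicValNat.eq_zero_of_not_dvd hnd]
          simp
        have habs_eq : ∀ w ∈ s₁, Ideal.absNorm w.asIdeal = q := by
          intro w hw
          rw [hs₁, Finset.mem_filter] at hw
          obtain ⟨i, -, hi⟩ := horb v w hw.2
          rw [← hi, hqorbit]
        have hfilter : ∑ w ∈ s₁, e w * (padicValNat ℓ (Ideal.absNorm w.asIdeal) : ℤ)
            = (∑ w ∈ s₁, e w) * (padicValNat ℓ q : ℤ) := by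
          rw [Finset.sum_mul]
          exact Finset.sum_congr rfl fun w hw => by rw [habs_eq w hw]
        have hkey : (∑ w ∈ s₁, e w) * (padicValNat ℓ q : ℤ) = 0 := by
          rw [← hfilter]
          have : (0:ℤ) = ∑ w ∈ s₁, e w * (padicValNat ℓ (Ideal.absNorm w.asIdeal) : ℤ)
              + ∑ w ∈ (supp I).filter (fun w => ¬ charQ w = ℓ),
                  e w * (padicValNat ℓ (Ideal.absNorm w.asIdeal) : ℤ) := by
            rw [hs₁]
            rw [hsplit]
            exact h0
          rw [hzero2, add_zero] at this
          exact this.symm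
        have hfne : (padicValNat ℓ q : ℤ) ≠ 0 := by
          have hdvd : ℓ ∣ q := by
            rw [hq]
            exact (dvd_absNorm_iff v Fact.out).mpr hℓ
          have := (charQ_prime v)
          intro hzero
          rw [Int.natCast_eq_zero, padicValNat.eq_zero_iff] at hzero
          rcases hzero with h1 | h1 | h1
          · exact Nat.Prime.ne_one Fact.out h1
          · exact absNorm_ne_zero v (by rw [hq] at h1; exact h1)
          · exact h1 hdvd
        rcases mul_eq_zero.mp hkey with h' | h'
        · exact h'
        · exact absurd h' hfne
      -- Step 3 : `v` is not fixed by `t`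
      have htv : t v ≠ v := by
        intro hfix
        have hfixall : ∀ i : ℕ, t^[i] v = v := by
          intro i
          induction i with
          | zero => rfl
          | succ i ih' => rw [Function.iterate_succ_apply', ih', hfix]
        have hsub : s₁ ⊆ {v} := by
          intro w hw
          rw [hs₁, Finset.mem_filter] at hw
          obtain ⟨i, -, hi⟩ := horb v w hw.2
          rw [hfixall i] at hi
          simpa using hi.symm
        have hvs₁ : v ∈ s₁ := by
          rw [hs₁, Finset.mem_filter]
          exact ⟨hv, rfl⟩
        have : s₁ = {v} := Finset.Subset.antisymm hsub (Finset.singleton_subset_iff.mpr hvs₁)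
        rw [this, Finset.sum_singleton] at hsum₁
        exact hev hsum₁
      have hper : Function.IsPeriodicPt t p v := htp v
      have hmp : Function.minimalPeriod t v = p := by
        rcases (Nat.Prime.eq_one_or_self_of_dvd hp _ hper.minimalPeriod_dvd) with h1 | h1
        · exfalso
          exact htv (Function.minimalPeriod_eq_one_iff_isFixedPt.mp h1)
        · exact h1
      have hinj : Set.InjOn (fun i => t^[i] v) (Set.Iio p) := by
        rw [← hmp]
        exact Function.iterate_injOn_Iio_minimalPeriod
      -- Step 4 : sum over the orbit vanishes
      set O : Finset (HeightOneSpectrum (𝓞 K)) :=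
        (Finset.range p).image (fun i => t^[i] v) with hO
      have horbsum : ∑ i ∈ Finset.range p, e (t^[i] v) = 0 := by
        have himg : ∑ w ∈ O, e w = ∑ i ∈ Finset.range p, e (t^[i] v) := by
          rw [hO]
          refine Finset.sum_image ?_
          intro i hi j hj hij
          exact hinj (Set.mem_Iio.mpr (Finset.mem_range.mp hi))
            (Set.mem_Iio.mpr (Finset.mem_range.mp hj)) hij
        have hsub : s₁ ⊆ O := by
          intro w hw
          rw [hs₁, Finset.mem_filter] at hw
          obtain ⟨i, hip, hi⟩ := horb v w hw.2
          rw [hO]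
          exact Finset.mem_image.mpr ⟨i, Finset.mem_range.mpr hip, hi⟩
        have hzero : ∀ w ∈ O, w ∉ s₁ → e w = 0 := by
          intro w hwO hws₁
          by_contra h
          apply hws₁
          rw [hs₁, Finset.mem_filter]
          refine ⟨(mem_supp I w).mpr h, ?_⟩
          rw [hO] at hwO
          obtain ⟨i, -, hi⟩ := Finset.mem_image.mp hwO
          rw [← hi]
          exact hcorbit i v
        rw [← himg, ← Finset.sum_subset hsub hzero]
        exact hsum₁
      -- Step 5 : construction of the correction term
      set eℕ : ℕ → ℤ := fun i => e (t^[i] v) with heℕ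
      set b : ℕ → ℤ := fun i => ∑ j ∈ Finset.range (i+1), eℕ j with hb
      set A₀ : (FractionalIdeal (𝓞 K)⁰ K)ˣ :=
        ∏ i ∈ Finset.range p, primeU (t^[i] v) ^ b i with hA₀
      have hSA₀ : S A₀ = ∏ i ∈ Finset.range p, primeU (t^[i+1] v) ^ b i := by
        rw [hA₀, map_prod]
        refine Finset.prod_congr rfl fun i _ => ?_
        rw [map_zpow, S_prime hS, ← ht, Function.iterate_succ_apply']
      have hcA : ∀ w, count K w (A₀ : FractionalIdeal (𝓞 K)⁰ K)
          = ∑ i ∈ Finset.range p, b i * (if t^[i] v = w then 1 else 0) := fun w => by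
        rw [hA₀]
        exact count_prod_primeU w _ _ b
      have hcSA : ∀ w, count K w ((S A₀ : (FractionalIdeal (𝓞 K)⁰ K)ˣ) : FractionalIdeal (𝓞 K)⁰ K)
          = ∑ i ∈ Finset.range p, b i * (if t^[i+1] v = w then 1 else 0) := fun w => by
        rw [hSA₀]
        exact count_prod_primeU w _ _ b
      have hiter_eq : ∀ i j, i < p → j < p → t^[i] v = t^[j] v → i = j := fun i j hi hj hij =>
        hinj (Set.mem_Iio.mpr hi) (Set.mem_Iio.mpr hj) hij
      have hbtop : b (p-1) = 0 := by
        rw [hb]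
        simp only
        rw [show p - 1 + 1 = p from Nat.succ_pred_eq_of_pos hp.pos]
        exact horbsum
      have hAk : ∀ k, k < p → count K (t^[k] v) (A₀ : FractionalIdeal (𝓞 K)⁰ K) = b k := by
        intro k hk
        rw [hcA, Finset.sum_eq_single k]
        · rw [if_pos rfl, mul_one]
        · intro i hi hik
          rw [if_neg, mul_zero]
          exact fun h => hik (hiter_eq i k (Finset.mem_range.mp hi) hk h)
        · intro h
          exact absurd (Finset.mem_range.mpr hk) h
      have hAw : ∀ w, w ∉ O → count K w (A₀ : FractionalIdeal (𝓞 K)⁰ K) = 0 := by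
        intro w hw
        rw [hcA]
        refine Finset.sum_eq_zero fun i hi => ?_
        rw [if_neg, mul_zero]
        intro h
        exact hw (by rw [hO]; exact Finset.mem_image.mpr ⟨i, hi, h⟩)
      have hSAv : count K v ((S A₀ : (FractionalIdeal (𝓞 K)⁰ K)ˣ) : FractionalIdeal (𝓞 K)⁰ K)
          = 0 := by
        rw [hcSA, Finset.sum_eq_single (p-1)]
        · rw [show p - 1 + 1 = p from Nat.succ_pred_eq_of_pos hp.pos, if_pos (htp v), mul_one]
          exact hbtop
        · intro i hi hik
          rw [if_neg, mul_zero]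
          intro h
          have hi1 : i + 1 < p := by
            have := Finset.mem_range.mp hi
            omega
          have : i + 1 = 0 := hiter_eq (i+1) 0 hi1 hp.pos h
          omega
        · intro h
          exact absurd (Finset.mem_range.mpr (by have := hp.pos; omega)) h
      have hSAk : ∀ k, 0 < k → k < p →
          count K (t^[k] v) ((S A₀ : (FractionalIdeal (𝓞 K)⁰ K)ˣ) : FractionalIdeal (𝓞 K)⁰ K)
            = b (k-1) := by
        intro k hk0 hkp
        rw [hcSA, Finset.sum_eq_single (k-1)]
        · rw [show k - 1 + 1 = k from Nat.succ_pred_eq_of_pos hk0, if_pos rfl, mul_one]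
        · intro i hi hik
          rw [if_neg, mul_zero]
          intro h
          rcases Nat.lt_or_ge (i+1) p with h1 | h1
          · have := hiter_eq (i+1) k h1 hkp h
            omega
          · have hip : i + 1 = p := by
              have := Finset.mem_range.mp hi
              omega
            rw [hip, htp v] at h
            have := hiter_eq 0 k hp.pos hkp h
            omega
        · intro h
          exact absurd (Finset.mem_range.mpr (by omega)) h
      have hSAw : ∀ w, w ∉ O →
          count K w ((S A₀ : (FractionalIdeal (𝓞 K)⁰ K)ˣ) : FractionalIdeal (𝓞 K)⁰ K) = 0 := by
        intro w hw
        rw [hcSA]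
        refine Finset.sum_eq_zero fun i hi => ?_
        rw [if_neg, mul_zero]
        intro h
        apply hw
        rcases Nat.lt_or_ge (i+1) p with h1 | h1
        · rw [hO]
          exact Finset.mem_image.mpr ⟨i+1, Finset.mem_range.mpr h1, h⟩
        · have hip : i + 1 = p := by
            have := Finset.mem_range.mp hi
            omega
          rw [hip, htp v] at h
          rw [hO]
          exact Finset.mem_image.mpr ⟨0, Finset.mem_range.mpr hp.pos, h⟩
      set X : (FractionalIdeal (𝓞 K)⁰ K)ˣ := A₀ * (S A₀)⁻¹ with hXdef
      set I' : (FractionalIdeal (𝓞 K)⁰ K)ˣ := I * X⁻¹ with hI'def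
      have hcX : ∀ w, count K w (X : FractionalIdeal (𝓞 K)⁰ K)
          = (if w ∈ O then e w else 0) := by
        intro w
        rw [hXdef, cW_mul, cW_inv]
        by_cases hwO : w ∈ O
        · rw [if_pos hwO]
          rw [hO] at hwO
          obtain ⟨k, hkmem, hk⟩ := Finset.mem_image.mp hwO
          have hkp : k < p := Finset.mem_range.mp hkmem
          subst hk
          rcases Nat.eq_zero_or_pos k with rfl | hk0
          · have h0 : (t^[0] v) = v := rfl
            rw [hAk 0 hp.pos, h0, hSAv, hb]
            simp [heℕ]
          · have h1 : b k = b (k-1) + eℕ k := by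
              rw [hb]
              simp only
              rw [show k - 1 + 1 = k from Nat.succ_pred_eq_of_pos hk0, Finset.sum_range_succ]
            rw [hAk k hkp, hSAk k hk0 hkp, h1, heℕ]
            ring
        · rw [if_neg hwO, hAw w hwO, hSAw w hwO]
          ring
      have hcI' : ∀ w, count K w (I' : FractionalIdeal (𝓞 K)⁰ K)
          = if w ∈ O then 0 else e w := by
        intro w
        rw [hI'def, cW_mul, cW_inv, hcX]
        by_cases hwO : w ∈ O
        · rw [if_pos hwO, if_pos hwO, he]
          ring
        · rw [if_neg hwO, if_neg hwO, he]
          ring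
      have hsub' : supp I' ⊆ (supp I).erase v := by
        intro w hw
        rw [mem_supp, hcI'] at hw
        by_cases hwO : w ∈ O
        · rw [if_pos hwO] at hw
          exact absurd rfl hw
        · rw [if_neg hwO] at hw
          refine Finset.mem_erase.mpr ⟨?_, (mem_supp I w).mpr hw⟩
          intro hwv
          apply hwO
          rw [hwv, hO]
          exact Finset.mem_image.mpr ⟨0, Finset.mem_range.mpr hp.pos, rfl⟩
      have hcard' : (supp I').card ≤ n := by
        have h1 := Finset.card_le_card hsub'
        rw [Finset.card_erase_of_mem hv] at h1
        omega
      have hNA : FractionalIdeal.absNorm (A₀ : FractionalIdeal (𝓞 K)⁰ K)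
          = ∏ i ∈ Finset.range p, (q:ℚ) ^ b i := by
        rw [hA₀, absNorm_prod_primeU]
        refine Finset.prod_congr rfl fun i _ => ?_
        rw [hqorbit i v, hq]
      have hNSA : FractionalIdeal.absNorm
          ((S A₀ : (FractionalIdeal (𝓞 K)⁰ K)ˣ) : FractionalIdeal (𝓞 K)⁰ K)
          = ∏ i ∈ Finset.range p, (q:ℚ) ^ b i := by
        rw [hSA₀, absNorm_prod_primeU]
        refine Finset.prod_congr rfl fun i _ => ?_
        rw [hqorbit (i+1) v, hq]
      have hprod_ne : (∏ i ∈ Finset.range p, (q:ℚ) ^ b i) ≠ 0 :=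
        Finset.prod_ne_zero_iff.mpr fun i _ =>
          zpow_ne_zero _ (by rw [hq]; exact_mod_cast absNorm_ne_zero v)
      have hNXval : FractionalIdeal.absNorm (X : FractionalIdeal (𝓞 K)⁰ K) = 1 := by
        rw [hXdef, Units.val_mul, _root_.map_mul, hNA, Units.val_inv_eq_inv_val, map_inv₀, hNSA,
          mul_inv_cancel₀ hprod_ne]
      have hNI' : FractionalIdeal.absNorm (I' : FractionalIdeal (𝓞 K)⁰ K) = 1 := by
        rw [hI'def, Units.val_mul, _root_.map_mul, hI, one_mul, Units.val_inv_eq_inv_val, map_inv₀,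
          hNXval, inv_one]
      obtain ⟨A', hA'⟩ := ih I' hNI' hcard'
      refine ⟨A' * A₀, ?_⟩
      have hIX : I = I' * X := by
        rw [hI'def, inv_mul_cancel_right]
      rw [hIX, hA', hXdef, _root_.map_mul, mul_inv, mul_mul_mul_comm]
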